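/- Let n ≥ 1, let Y ∈ ℂ^{n×n} be invertible, let V⁰ ∈ ℂⁿ, and let (V_*, s_*) be a base solution of the power flow equations diag(V_*)·conj(Y(V_* − V⁰)) = s_* with all entries of V_* nonzero; assume J_* is invertible with inverse blocks M_*, N_*. Let s ∈ ℂⁿ and r > 0 be arbitrary and set Δs = s − s_*. If (1/r)·‖M_*·conj(Z_*)·conj(Δs) + N_*·Z_*·Δs‖ + ‖J_*⁻¹‖·‖Z_*·diag(s)‖·r + ‖M_*·conj(Z_*)·diag(conj(Δs)) + N_*·diag(Z_*·Δs)‖ + ‖M_*·diag(conj(Z_*·Δs)) + N_*·Z_*·diag(Δs)‖ ≤ 1, then there exists V ∈ ℂⁿ with all entries nonzero solving diag(V)·conj(Y(V − V⁰)) = s. Moreover, if r < 1, this solution V satisfies |V_{*,i}|/(1+r) ≤ |V_i| ≤ |V_{*,i}|/(1−r) for every index i. -/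

import Mathlib

open Matrix

/-- ℓ∞ norm of a complex vector: `max_i |x_i|`. -/
noncomputable def vnorm {n : ℕ} (x : Fin n → ℂ) : ℝ := ⨆ i, ‖x i‖

/-- Induced ∞-matrix norm: `max_i ∑_j |A_{ij}|`. -/
noncomputable def mnorm {n : ℕ} (A : Matrix (Fin n) (Fin n) ℂ) : ℝ :=
  ⨆ i, ∑ j, ‖A i j‖

/-- Induced ∞-matrix norm for 2n×2n block matrices. -/
noncomputable def mnorm2 {n : ℕ} (A : Matrix (Fin n ⊕ Fin n) (Fin n ⊕ Fin n) ℂ) : ℝ :=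
  ⨆ i, ∑ j, ‖A i j‖

/-- Entrywise complex conjugation of a matrix. -/
def mconj {n : ℕ} (A : Matrix (Fin n) (Fin n) ℂ) : Matrix (Fin n) (Fin n) ℂ :=
  A.map (starRingEnd ℂ)

section helpers
variable {n : ℕ}

lemma le_vnorm (x : Fin n → ℂ) (i : Fin n) : ‖x i‖ ≤ vnorm x := by
  exact le_ciSup (f := fun i => ‖x i‖) (Set.Finite.bddAbove (Set.finite_range _)) i

lemma vnorm_le [Nonempty (Fin n)] {x : Fin n → ℂ} {t : ℝ} (h : ∀ i, ‖x i‖ ≤ t) :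
    vnorm x ≤ t := ciSup_le h

lemma vnorm_nonneg [Nonempty (Fin n)] (x : Fin n → ℂ) : 0 ≤ vnorm x :=
  le_trans (norm_nonneg _) (le_vnorm x (Classical.arbitrary _))

lemma rowsum_le_mnorm (A : Matrix (Fin n) (Fin n) ℂ) (i : Fin n) :
    ∑ j, ‖A i j‖ ≤ mnorm A := by
  exact le_ciSup (f := fun i => ∑ j, ‖A i j‖) (Set.Finite.bddAbove (Set.finite_range _)) i

lemma mnorm_nonneg [Nonempty (Fin n)] (A : Matrix (Fin n) (Fin n) ℂ) : 0 ≤ mnorm A :=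
  le_trans (Finset.sum_nonneg fun _ _ => norm_nonneg _)
    (rowsum_le_mnorm A (Classical.arbitrary _))

lemma rowsum_le_mnorm2 (A : Matrix (Fin n ⊕ Fin n) (Fin n ⊕ Fin n) ℂ) (i : Fin n ⊕ Fin n) :
    ∑ j, ‖A i j‖ ≤ mnorm2 A := by
  exact le_ciSup (f := fun i => ∑ j, ‖A i j‖) (Set.Finite.bddAbove (Set.finite_range _)) i

lemma mnorm2_nonneg [Nonempty (Fin n)] (A : Matrix (Fin n ⊕ Fin n) (Fin n ⊕ Fin n) ℂ) :
    0 ≤ mnorm2 A :=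
  le_trans (Finset.sum_nonneg fun _ _ => norm_nonneg _)
    (rowsum_le_mnorm2 A (Sum.inl (Classical.arbitrary _)))

lemma vnorm_add_le [Nonempty (Fin n)] (x y : Fin n → ℂ) :
    vnorm (x + y) ≤ vnorm x + vnorm y :=
  vnorm_le fun i => le_trans (by simpa using norm_add_le (x i) (y i))
    (add_le_add (le_vnorm x i) (le_vnorm y i))

lemma vnorm_star (x : Fin n → ℂ) : vnorm (star x) = vnorm x := by
  unfold vnorm; congr 1; simp

lemma vnorm_neg (x : Fin n → ℂ) : vnorm (-x) = vnorm x := by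
  unfold vnorm; congr 1; simp

lemma vnorm_sub_le [Nonempty (Fin n)] (x y : Fin n → ℂ) :
    vnorm (x - y) ≤ vnorm x + vnorm y := by
  rw [sub_eq_add_neg]
  exact (vnorm_add_le x (-y)).trans (by rw [vnorm_neg])

lemma abs_mulVec_le (A : Matrix (Fin n) (Fin n) ℂ) (x : Fin n → ℂ) (i : Fin n) :
    ‖(A *ᵥ x) i‖ ≤ ∑ j, ‖A i j‖ * ‖x j‖ := by
  refine le_trans (norm_sum_le Finset.univ (fun j => A i j * x j)) (le_of_eq ?_)
  exact Finset.sum_congr rfl fun j _ => norm_mul _ _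

lemma vnorm_mulVec_le [Nonempty (Fin n)] (A : Matrix (Fin n) (Fin n) ℂ) (x : Fin n → ℂ) :
    vnorm (A *ᵥ x) ≤ mnorm A * vnorm x := by
  refine vnorm_le fun i => ?_
  calc ‖(A *ᵥ x) i‖ ≤ ∑ j, ‖A i j‖ * ‖x j‖ :=
        abs_mulVec_le A x i
    _ ≤ ∑ j, ‖A i j‖ * vnorm x :=
        Finset.sum_le_sum fun j _ => mul_le_mul_of_nonneg_left (le_vnorm x j) (norm_nonneg _)
    _ = (∑ j, ‖A i j‖) * vnorm x := by rw [Finset.sum_mul]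
    _ ≤ mnorm A * vnorm x := mul_le_mul_of_nonneg_right (rowsum_le_mnorm A i) (vnorm_nonneg x)

lemma vnorm_mul_le [Nonempty (Fin n)] (x y : Fin n → ℂ) :
    vnorm (x * y) ≤ vnorm x * vnorm y :=
  vnorm_le fun i => by
    rw [Pi.mul_apply, norm_mul]
    exact mul_le_mul (le_vnorm x i) (le_vnorm y i) (norm_nonneg _) (vnorm_nonneg x)

lemma vnorm_pair_le [Nonempty (Fin n)] (M N P Q : Matrix (Fin n) (Fin n) ℂ)
    (p q : Fin n → ℂ) {t : ℝ} (hp : vnorm p ≤ t) (hq : vnorm q ≤ t) :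
    vnorm (M *ᵥ p + N *ᵥ q) ≤ mnorm2 (Matrix.fromBlocks M N P Q) * t := by
  have ht : 0 ≤ t := le_trans (vnorm_nonneg p) hp
  refine vnorm_le fun i => ?_
  have hrow : ∑ j, ‖M i j‖ + ∑ j, ‖N i j‖
      ≤ mnorm2 (Matrix.fromBlocks M N P Q) := by
    simpa [Fintype.sum_sum_type] using
      rowsum_le_mnorm2 (Matrix.fromBlocks M N P Q) (Sum.inl i)
  calc ‖(M *ᵥ p + N *ᵥ q) i‖
      ≤ ‖(M *ᵥ p) i‖ + ‖(N *ᵥ q) i‖ := norm_add_le _ _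
    _ ≤ ∑ j, ‖M i j‖ * ‖p j‖
        + ∑ j, ‖N i j‖ * ‖q j‖ :=
        add_le_add (abs_mulVec_le M p i) (abs_mulVec_le N q i)
    _ ≤ ∑ j, ‖M i j‖ * t + ∑ j, ‖N i j‖ * t := by
        refine add_le_add (Finset.sum_le_sum fun j _ => ?_) (Finset.sum_le_sum fun j _ => ?_)
        · exact mul_le_mul_of_nonneg_left ((le_vnorm p j).trans hp) (norm_nonneg _)
        · exact mul_le_mul_of_nonneg_left ((le_vnorm q j).trans hq) (norm_nonneg _)
    _ = (∑ j, ‖M i j‖ + ∑ j, ‖N i j‖) * t := by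
        rw [add_mul, Finset.sum_mul, Finset.sum_mul]
    _ ≤ mnorm2 (Matrix.fromBlocks M N P Q) * t := mul_le_mul_of_nonneg_right hrow ht

lemma vnorm_eq_norm [Nonempty (Fin n)] (x : Fin n → ℂ) : vnorm x = ‖x‖ := by
  refine le_antisymm (vnorm_le fun i => ?_) ?_
  · simpa using norm_le_pi_norm x i
  · refine (pi_norm_le_iff_of_nonneg (vnorm_nonneg x)).mpr fun i => ?_
    simpa using le_vnorm x i

lemma star_mulVec' (A : Matrix (Fin n) (Fin n) ℂ) (x : Fin n → ℂ) :
    star (A *ᵥ x) = mconj A *ᵥ star x := by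
  ext i
  simp only [Pi.star_apply, Matrix.mulVec, dotProduct, mconj, Matrix.map_apply]
  rw [star_sum]; simp [mul_comm]

lemma diagonal_mulVec' (d x : Fin n → ℂ) : Matrix.diagonal d *ᵥ x = d * x := by
  ext i; simp [Matrix.mulVec_diagonal]

lemma mul_diagonal_mulVec (A : Matrix (Fin n) (Fin n) ℂ) (d x : Fin n → ℂ) :
    (A * Matrix.diagonal d) *ᵥ x = A *ᵥ (d * x) := by
  rw [← Matrix.mulVec_mulVec, diagonal_mulVec']

lemma mconj_mul (A B : Matrix (Fin n) (Fin n) ℂ) : mconj (A * B) = mconj A * mconj B :=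
  Matrix.map_mul

lemma mconj_diagonal (d : Fin n → ℂ) : mconj (Matrix.diagonal d) = Matrix.diagonal (star d) := by
  unfold mconj
  rw [Matrix.diagonal_map (map_zero _)]; rfl

lemma mnorm_mconj (A : Matrix (Fin n) (Fin n) ℂ) : mnorm (mconj A) = mnorm A := by
  unfold mnorm mconj; congr 1; simp

lemma cont_mulVec (A : Matrix (Fin n) (Fin n) ℂ) : Continuous fun x : Fin n → ℂ => A *ᵥ x := by
  refine continuous_pi fun i => ?_
  simp only [Matrix.mulVec, dotProduct]
  exact continuous_finset_sum _ fun j _ => (continuous_const.mul (continuous_apply j))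

end helpers

lemma exists_fixedPt {E : Type*} [NormedAddCommGroup E] [NormedSpace ℝ E]
    [FiniteDimensional ℝ E] (f : E → E) (hf : Continuous f) (ρ : ℝ) (hρ : 0 ≤ ρ)
    (hself : ∀ x, ‖x‖ ≤ ρ → ‖f x‖ ≤ ρ)
    (hlip : ∀ x y, ‖x‖ ≤ ρ → ‖y‖ ≤ ρ → ‖f x - f y‖ ≤ ‖x - y‖) :
    ∃ x, ‖x‖ ≤ ρ ∧ f x = x := by
  set K : Set E := Metric.closedBall 0 ρ with hK
  have hmem : ∀ x : E, x ∈ K ↔ ‖x‖ ≤ ρ := by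
    intro x; simp [hK, Metric.mem_closedBall, dist_zero_right]
  haveI : Nonempty K := ⟨⟨0, (hmem 0).mpr (by simpa using hρ)⟩⟩
  haveI : CompleteSpace K := (Metric.isClosed_closedBall (x := (0:E)) (ε := ρ)).completeSpace_coe
  have key : ∀ k : ℕ, ∃ x : E, ‖x‖ ≤ ρ ∧ x = (1 - 1/(k+2) : ℝ) • f x := by
    intro k
    set θ : ℝ := 1 - 1/(k+2) with hθdef
    have hθ0 : 0 ≤ θ := by
      rw [hθdef]
      have : 1/((k:ℝ)+2) ≤ 1 := by
        rw [div_le_one (by positivity)]; linarith [Nat.cast_nonneg (α := ℝ) k]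
      linarith
    have hθ1 : θ < 1 := by
      rw [hθdef]
      have : 0 < 1/((k:ℝ)+2) := by positivity
      linarith
    set g : K → K := fun x => ⟨θ • f x, by
      rw [hmem, norm_smul, Real.norm_eq_abs, abs_of_nonneg hθ0]
      calc θ * ‖f (x:E)‖ ≤ 1 * ρ := by
            have := hself (x:E) ((hmem _).mp x.2)
            exact mul_le_mul hθ1.le this (norm_nonneg _) zero_le_one
        _ = ρ := one_mul ρ⟩ with hg
    have hcw : ContractingWith ⟨θ, hθ0⟩ g := by
      constructor
      · exact_mod_cast hθ1
      · refine LipschitzWith.of_dist_le_mul fun x y => ?_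
        have : dist (g x : E) (g y : E) = θ * ‖f (x:E) - f (y:E)‖ := by
          rw [dist_eq_norm]
          show ‖θ • f (x:E) - θ • f (y:E)‖ = _
          rw [← smul_sub, norm_smul, Real.norm_eq_abs, abs_of_nonneg hθ0]
        rw [Subtype.dist_eq, Subtype.dist_eq, this, dist_eq_norm]
        exact mul_le_mul_of_nonneg_left
          (hlip _ _ ((hmem _).mp x.2) ((hmem _).mp y.2)) hθ0
    obtain ⟨x, hx⟩ := hcw.exists_fixedPoint (Classical.arbitrary K)
      (by rw [edist_dist]; exact ENNReal.ofReal_ne_top)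
    refine ⟨(x : E), (hmem _).mp x.2, ?_⟩
    have := hx.1
    rw [Function.IsFixedPt] at this
    exact congrArg Subtype.val this.symm
  choose xs hxs hfix using key
  have hcpt : IsCompact K := isCompact_closedBall 0 ρ
  have hxsK : ∀ k, xs k ∈ K := fun k => (hmem _).mpr (hxs k)
  obtain ⟨x, hxK, φ, hφ, hlim⟩ := hcpt.tendsto_subseq hxsK
  have hθlim : Filter.Tendsto (fun k : ℕ => (1 - 1/((φ k : ℝ)+2))) Filter.atTop (nhds 1) := by
    have h2 : Filter.Tendsto (fun k : ℕ => ((φ k : ℝ) + 2)) Filter.atTop Filter.atTop :=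
      Filter.tendsto_atTop_add_const_right _ 2
        ((tendsto_natCast_atTop_atTop).comp hφ.tendsto_atTop)
    have := Filter.Tendsto.div_atTop (f := fun _ : ℕ => (1:ℝ)) tendsto_const_nhds h2
    simpa using Filter.Tendsto.const_sub 1 this
  have hflim : Filter.Tendsto (fun k => f (xs (φ k))) Filter.atTop (nhds (f x)) :=
    (hf.continuousAt.tendsto).comp hlim
  have hlim2 : Filter.Tendsto (fun k => (1 - 1/((φ k : ℝ)+2)) • f (xs (φ k)))
      Filter.atTop (nhds ((1:ℝ) • f x)) := hθlim.smul hflim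
  have : Filter.Tendsto (fun k => xs (φ k)) Filter.atTop (nhds ((1:ℝ) • f x)) := by
    refine hlim2.congr fun k => ?_
    rw [← hfix (φ k)]
  have hfx : (1:ℝ) • f x = x := tendsto_nhds_unique this hlim
  exact ⟨x, (hmem _).mp hxK, by simpa using hfx⟩

lemma radius_choice {c Cn Dn Bq r : ℝ} (hr : 0 < r) (hc0 : 0 ≤ c) (hCn0 : 0 ≤ Cn)
    (hDn0 : 0 ≤ Dn) (hBq0 : 0 ≤ Bq)
    (hcond : 1 / r * c + Bq * r + Cn + Dn ≤ 1) :
    ∃ ρ : ℝ, 0 ≤ ρ ∧ ρ ≤ r ∧ c + (Cn + Dn) * ρ + Bq * ρ ^ 2 ≤ ρ ∧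
      Cn + Dn + 2 * Bq * ρ ≤ 1 := by
  have hkey : c + (Cn + Dn) * r + Bq * r ^ 2 ≤ r := by
    have h := mul_le_mul_of_nonneg_left hcond hr.le
    have h1 : r * (1 / r * c) = c := by field_simp
    nlinarith [h, h1]
  by_cases em : Cn + Dn + 2 * Bq * r ≤ 1
  · exact ⟨r, hr.le, le_refl r, hkey, em⟩
  · push_neg at em
    have hCD1 : Cn + Dn < 1 := by
      have h1 : 0 ≤ 1 / r * c := by positivity
      rcases eq_or_lt_of_le (mul_nonneg hBq0 hr.le) with h | h
      · exfalso; nlinarith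
      · nlinarith
    have hBq : 0 < Bq := by nlinarith
    refine ⟨(1 - (Cn + Dn)) / (2 * Bq), div_nonneg (by linarith) (by positivity), ?_, ?_, ?_⟩
    · rw [div_le_iff₀ (by positivity)]
      nlinarith
    · have hρdef : 2 * Bq * ((1 - (Cn + Dn)) / (2 * Bq)) = 1 - (Cn + Dn) := by
        field_simp
      set ρ := (1 - (Cn + Dn)) / (2 * Bq) with hρ
      have hρ0 : 0 ≤ ρ := div_nonneg (by linarith) (by positivity)
      have hρr' : ρ ≤ r := by
        rw [hρ, div_le_iff₀ (by positivity)]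
        nlinarith
      nlinarith [sq_nonneg (r - ρ), hkey, hρdef, hBq, hρr']
    · have hρdef : 2 * Bq * ((1 - (Cn + Dn)) / (2 * Bq)) = 1 - (Cn + Dn) := by
        field_simp
      linarith

theorem solvability_certificate {n : ℕ} (hn : 1 ≤ n)
    (Y : Matrix (Fin n) (Fin n) ℂ) (hY : IsUnit Y)
    (V0 Vs ss : Fin n → ℂ)
    (hVs : ∀ i, Vs i ≠ 0)
    (hbase : Matrix.diagonal Vs *ᵥ star (Y *ᵥ (Vs - V0)) = ss)
    (Z : Matrix (Fin n) (Fin n) ℂ)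
    (hZ : Z = (Matrix.diagonal (star Vs))⁻¹ * (mconj Y)⁻¹ * (Matrix.diagonal Vs)⁻¹)
    (J : Matrix (Fin n ⊕ Fin n) (Fin n ⊕ Fin n) ℂ)
    (hJ : J = Matrix.fromBlocks 1 (mconj Z * Matrix.diagonal (star ss))
                (Z * Matrix.diagonal ss) 1)
    (hJu : IsUnit J)
    (M N : Matrix (Fin n) (Fin n) ℂ)
    (hMN : J⁻¹ = Matrix.fromBlocks M N (mconj N) (mconj M))
    (s : Fin n → ℂ) (r : ℝ) (hr : 0 < r)
    (Δs : Fin n → ℂ) (hΔs : Δs = s - ss)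
    (hcond :
      (1 / r) * vnorm ((M * mconj Z) *ᵥ star Δs + (N * Z) *ᵥ Δs)
      + mnorm2 J⁻¹ * mnorm (Z * Matrix.diagonal s) * r
      + mnorm (M * mconj Z * Matrix.diagonal (star Δs) + N * Matrix.diagonal (Z *ᵥ Δs))
      + mnorm (M * Matrix.diagonal (star (Z *ᵥ Δs)) + N * Z * Matrix.diagonal Δs) ≤ 1) :
    ∃ V : Fin n → ℂ, (∀ i, V i ≠ 0) ∧
      Matrix.diagonal V *ᵥ star (Y *ᵥ (V - V0)) = s ∧
      (r < 1 → ∀ i, ‖Vs i‖ / (1 + r) ≤ ‖V i‖ ∧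
        ‖V i‖ ≤ ‖Vs i‖ / (1 - r)) := by
  haveI : Nonempty (Fin n) := ⟨⟨0, hn⟩⟩
  set G := Z * Matrix.diagonal s with hG
  set a := (M * mconj Z) *ᵥ star Δs + (N * Z) *ᵥ Δs with ha
  set Cm := M * mconj Z * Matrix.diagonal (star Δs) + N * Matrix.diagonal (Z *ᵥ Δs) with hCm
  set Dm := M * Matrix.diagonal (star (Z *ᵥ Δs)) + N * Z * Matrix.diagonal Δs with hDm
  set R2 : (Fin n → ℂ) → (Fin n → ℂ) := fun w =>
    -(Z *ᵥ Δs) - (Z * Matrix.diagonal Δs) *ᵥ w - star w * (Z *ᵥ Δs) - star w * (G *ᵥ w)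
    with hR2
  set F : (Fin n → ℂ) → (Fin n → ℂ) := fun w => M *ᵥ star (R2 w) + N *ᵥ (R2 w) with hF
  -- the expanded form of F
  have hFeq : ∀ w, F w = -a - Cm *ᵥ star w - Dm *ᵥ w
      - (M *ᵥ (w * star (G *ᵥ w)) + N *ᵥ (star w * (G *ᵥ w))) := by
    intro w
    simp only [hF, hR2, hG, ha, hCm, hDm, star_sub, star_neg, star_mul', star_star,
      star_mulVec', mconj_mul, mconj_diagonal, ← Matrix.mulVec_mulVec, diagonal_mulVec',
      Matrix.mulVec_sub, Matrix.mulVec_add, Matrix.mulVec_neg, Matrix.add_mulVec, mul_comm]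
    abel
  -- norm quantities
  set c := vnorm a with hc
  set Cn := mnorm Cm with hCn
  set Dn := mnorm Dm with hDn
  set B2 := mnorm2 J⁻¹ with hB2
  set mG := mnorm G with hmG
  have hc0 : 0 ≤ c := vnorm_nonneg a
  have hCn0 : 0 ≤ Cn := mnorm_nonneg Cm
  have hDn0 : 0 ≤ Dn := mnorm_nonneg Dm
  have hB20 : 0 ≤ B2 := mnorm2_nonneg _
  have hmG0 : 0 ≤ mG := mnorm_nonneg G
  -- estimates
  have hFbound : ∀ (ρ' : ℝ) (w : Fin n → ℂ), 0 ≤ ρ' → vnorm w ≤ ρ' →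
      vnorm (F w) ≤ c + (Cn + Dn) * ρ' + (B2 * mG) * ρ' ^ 2 := by
    intro ρ' w h0 hw
    rw [hFeq w]
    have hGw : vnorm (G *ᵥ w) ≤ mG * ρ' :=
      (vnorm_mulVec_le G w).trans (mul_le_mul_of_nonneg_left hw hmG0)
    have hp : vnorm (w * star (G *ᵥ w)) ≤ ρ' * (mG * ρ') :=
      (vnorm_mul_le _ _).trans (by
        rw [vnorm_star]
        exact mul_le_mul hw hGw (vnorm_nonneg _) h0)
    have hq : vnorm (star w * (G *ᵥ w)) ≤ ρ' * (mG * ρ') :=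
      (vnorm_mul_le _ _).trans (by
        rw [vnorm_star]
        exact mul_le_mul hw hGw (vnorm_nonneg _) h0)
    have hQ : vnorm (M *ᵥ (w * star (G *ᵥ w)) + N *ᵥ (star w * (G *ᵥ w)))
        ≤ B2 * (ρ' * (mG * ρ')) := by
      have := vnorm_pair_le M N (mconj N) (mconj M) _ _ hp hq
      rwa [← hMN] at this
    have e1 : vnorm (Cm *ᵥ star w) ≤ Cn * ρ' := by
      refine (vnorm_mulVec_le Cm (star w)).trans ?_
      rw [vnorm_star]
      exact mul_le_mul_of_nonneg_left hw hCn0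
    have e2 : vnorm (Dm *ᵥ w) ≤ Dn * ρ' :=
      (vnorm_mulVec_le Dm w).trans (mul_le_mul_of_nonneg_left hw hDn0)
    calc vnorm (-a - Cm *ᵥ star w - Dm *ᵥ w
            - (M *ᵥ (w * star (G *ᵥ w)) + N *ᵥ (star w * (G *ᵥ w))))
        ≤ vnorm (-a - Cm *ᵥ star w - Dm *ᵥ w)
          + vnorm (M *ᵥ (w * star (G *ᵥ w)) + N *ᵥ (star w * (G *ᵥ w))) := vnorm_sub_le _ _
      _ ≤ (vnorm (-a - Cm *ᵥ star w) + vnorm (Dm *ᵥ w))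
          + vnorm (M *ᵥ (w * star (G *ᵥ w)) + N *ᵥ (star w * (G *ᵥ w))) := by
          have := vnorm_sub_le (-a - Cm *ᵥ star w) (Dm *ᵥ w)
          linarith
      _ ≤ ((vnorm (-a) + vnorm (Cm *ᵥ star w)) + vnorm (Dm *ᵥ w))
          + vnorm (M *ᵥ (w * star (G *ᵥ w)) + N *ᵥ (star w * (G *ᵥ w))) := by
          have := vnorm_sub_le (-a) (Cm *ᵥ star w)
          linarith
      _ ≤ ((c + Cn * ρ') + Dn * ρ') + B2 * (ρ' * (mG * ρ')) := by
          rw [vnorm_neg]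
          linarith
      _ = c + (Cn + Dn) * ρ' + (B2 * mG) * ρ' ^ 2 := by ring
  have hFlip : ∀ (ρ' : ℝ) (w v : Fin n → ℂ), vnorm w ≤ ρ' → vnorm v ≤ ρ' →
      vnorm (F w - F v) ≤ (Cn + Dn + 2 * (B2 * mG) * ρ') * vnorm (w - v) := by
    intro ρ' w v hw hv
    have h0 : 0 ≤ ρ' := le_trans (vnorm_nonneg w) hw
    have hd : F w - F v = -(Cm *ᵥ star (w - v)) - Dm *ᵥ (w - v)
        - ((M *ᵥ ((w - v) * star (G *ᵥ w)) + N *ᵥ (star (w - v) * (G *ᵥ w)))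
           + (M *ᵥ (v * star (G *ᵥ (w - v))) + N *ᵥ (star v * (G *ᵥ (w - v))))) := by
      rw [hFeq w, hFeq v]
      simp only [star_sub, Matrix.mulVec_sub, Matrix.mulVec_add, sub_mul, mul_sub]
      abel
    set δ := vnorm (w - v) with hδ
    have hδ0 : 0 ≤ δ := vnorm_nonneg _
    have hGw : vnorm (G *ᵥ w) ≤ mG * ρ' :=
      (vnorm_mulVec_le G w).trans (mul_le_mul_of_nonneg_left hw hmG0)
    have hGd : vnorm (G *ᵥ (w - v)) ≤ mG * δ :=
      (vnorm_mulVec_le G (w - v)).trans (mul_le_mul_of_nonneg_left le_rfl hmG0)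
    have hp1 : vnorm ((w - v) * star (G *ᵥ w)) ≤ mG * ρ' * δ := by
      refine (vnorm_mul_le _ _).trans ?_
      rw [vnorm_star]
      calc δ * vnorm (G *ᵥ w) ≤ δ * (mG * ρ') :=
            mul_le_mul_of_nonneg_left hGw hδ0
        _ = mG * ρ' * δ := by ring
    have hq1 : vnorm (star (w - v) * (G *ᵥ w)) ≤ mG * ρ' * δ := by
      refine (vnorm_mul_le _ _).trans ?_
      rw [vnorm_star]
      calc δ * vnorm (G *ᵥ w) ≤ δ * (mG * ρ') :=
            mul_le_mul_of_nonneg_left hGw hδ0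
        _ = mG * ρ' * δ := by ring
    have hp2 : vnorm (v * star (G *ᵥ (w - v))) ≤ mG * ρ' * δ := by
      refine (vnorm_mul_le _ _).trans ?_
      rw [vnorm_star]
      calc vnorm v * vnorm (G *ᵥ (w - v)) ≤ ρ' * (mG * δ) :=
            mul_le_mul hv hGd (vnorm_nonneg _) h0
        _ = mG * ρ' * δ := by ring
    have hq2 : vnorm (star v * (G *ᵥ (w - v))) ≤ mG * ρ' * δ := by
      refine (vnorm_mul_le _ _).trans ?_
      rw [vnorm_star]
      calc vnorm v * vnorm (G *ᵥ (w - v)) ≤ ρ' * (mG * δ) :=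
            mul_le_mul hv hGd (vnorm_nonneg _) h0
        _ = mG * ρ' * δ := by ring
    have hQ1 : vnorm (M *ᵥ ((w - v) * star (G *ᵥ w)) + N *ᵥ (star (w - v) * (G *ᵥ w)))
        ≤ B2 * (mG * ρ' * δ) := by
      have := vnorm_pair_le M N (mconj N) (mconj M) _ _ hp1 hq1
      rwa [← hMN] at this
    have hQ2 : vnorm (M *ᵥ (v * star (G *ᵥ (w - v))) + N *ᵥ (star v * (G *ᵥ (w - v))))
        ≤ B2 * (mG * ρ' * δ) := by
      have := vnorm_pair_le M N (mconj N) (mconj M) _ _ hp2 hq2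
      rwa [← hMN] at this
    have e1 : vnorm (Cm *ᵥ star (w - v)) ≤ Cn * δ := by
      refine (vnorm_mulVec_le Cm (star (w - v))).trans ?_
      rw [vnorm_star, hδ]
    have e2 : vnorm (Dm *ᵥ (w - v)) ≤ Dn * δ :=
      (vnorm_mulVec_le Dm (w - v)).trans (mul_le_mul_of_nonneg_left le_rfl hDn0)
    rw [hd]
    calc vnorm (-(Cm *ᵥ star (w - v)) - Dm *ᵥ (w - v)
            - ((M *ᵥ ((w - v) * star (G *ᵥ w)) + N *ᵥ (star (w - v) * (G *ᵥ w)))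
               + (M *ᵥ (v * star (G *ᵥ (w - v))) + N *ᵥ (star v * (G *ᵥ (w - v))))))
        ≤ vnorm (-(Cm *ᵥ star (w - v)) - Dm *ᵥ (w - v))
          + vnorm ((M *ᵥ ((w - v) * star (G *ᵥ w)) + N *ᵥ (star (w - v) * (G *ᵥ w)))
               + (M *ᵥ (v * star (G *ᵥ (w - v))) + N *ᵥ (star v * (G *ᵥ (w - v))))) :=
          vnorm_sub_le _ _
      _ ≤ (vnorm (-(Cm *ᵥ star (w - v))) + vnorm (Dm *ᵥ (w - v)))
          + (vnorm (M *ᵥ ((w - v) * star (G *ᵥ w)) + N *ᵥ (star (w - v) * (G *ᵥ w)))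
             + vnorm (M *ᵥ (v * star (G *ᵥ (w - v))) + N *ᵥ (star v * (G *ᵥ (w - v))))) := by
          have h1 := vnorm_sub_le (-(Cm *ᵥ star (w - v))) (Dm *ᵥ (w - v))
          have h2 := vnorm_add_le (M *ᵥ ((w - v) * star (G *ᵥ w)) + N *ᵥ (star (w - v) * (G *ᵥ w)))
            (M *ᵥ (v * star (G *ᵥ (w - v))) + N *ᵥ (star v * (G *ᵥ (w - v))))
          linarith
      _ ≤ (Cn * δ + Dn * δ) + (B2 * (mG * ρ' * δ) + B2 * (mG * ρ' * δ)) := by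
          rw [vnorm_neg]
          linarith
      _ = (Cn + Dn + 2 * (B2 * mG) * ρ') * δ := by ring
  -- choose the radius
  obtain ⟨ρ, hρ0, hρr, hρself, hρlip⟩ :
      ∃ ρ : ℝ, 0 ≤ ρ ∧ ρ ≤ r ∧ c + (Cn + Dn) * ρ + (B2 * mG) * ρ ^ 2 ≤ ρ ∧
        Cn + Dn + 2 * (B2 * mG) * ρ ≤ 1 := by
    apply radius_choice hr hc0 hCn0 hDn0 (mul_nonneg hB20 hmG0)
    linarith [hcond]
  -- fixed point of F
  obtain ⟨w, hwρ, hFw⟩ : ∃ w : Fin n → ℂ, vnorm w ≤ ρ ∧ F w = w := by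
    have hcont : Continuous F := by
      have hR2c : Continuous R2 := by
        rw [hR2]
        exact (((continuous_const.sub ((cont_mulVec _).comp continuous_id)).sub
          ((continuous_star.mul continuous_const))).sub
          (continuous_star.mul ((cont_mulVec G).comp continuous_id)))
      rw [hF]
      exact ((cont_mulVec M).comp (continuous_star.comp hR2c)).add ((cont_mulVec N).comp hR2c)
    obtain ⟨w, hw1, hw2⟩ := exists_fixedPt F hcont ρ hρ0
      (fun x hx => by
        rw [← vnorm_eq_norm] at hx ⊢
        exact le_trans (hFbound ρ x hρ0 hx) hρself)
      (fun x y hx hy => by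
        rw [← vnorm_eq_norm] at hx hy ⊢
        rw [← vnorm_eq_norm]
        calc vnorm (F x - F y) ≤ (Cn + Dn + 2 * (B2 * mG) * ρ) * vnorm (x - y) :=
              hFlip ρ x y hx hy
          _ ≤ 1 * vnorm (x - y) := mul_le_mul_of_nonneg_right hρlip (vnorm_nonneg _)
          _ = vnorm (x - y) := one_mul _)
    exact ⟨w, by rw [vnorm_eq_norm]; exact hw1, hw2⟩
  -- matrix inverse facts
  have hdet : ∀ (d : Fin n → ℂ), (∀ i, d i ≠ 0) → (Matrix.diagonal d).det ≠ 0 := by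
    intro d hd
    rw [Matrix.det_diagonal]
    exact Finset.prod_ne_zero_iff.mpr fun i _ => hd i
  have hVsdet : (Matrix.diagonal Vs).det ≠ 0 := hdet Vs hVs
  have hVsdet' : (Matrix.diagonal (star Vs)).det ≠ 0 :=
    hdet (star Vs) fun i => star_ne_zero.mpr (hVs i)
  have hYdet : (mconj Y).det ≠ 0 := by
    unfold mconj
    rw [← RingHom.mapMatrix_apply, ← RingHom.map_det]
    simpa using ((Matrix.isUnit_iff_isUnit_det Y).mp hY).ne_zero
  have cancel : ∀ (A B X : Matrix (Fin n) (Fin n) ℂ), A * B = 1 → A * (B * X) = X := by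
    intro A B X h; rw [← Matrix.mul_assoc, h, Matrix.one_mul]
  have hKZ : (Matrix.diagonal Vs * mconj Y * Matrix.diagonal (star Vs)) * Z = 1 := by
    rw [hZ]
    simp only [Matrix.mul_assoc]
    rw [cancel _ _ _ (Matrix.mul_nonsing_inv _ (isUnit_iff_ne_zero.mpr hVsdet')),
        cancel _ _ _ (Matrix.mul_nonsing_inv _ (isUnit_iff_ne_zero.mpr hYdet)),
        Matrix.mul_nonsing_inv _ (isUnit_iff_ne_zero.mpr hVsdet)]
  have hJinv : J * J⁻¹ = 1 := Matrix.mul_nonsing_inv _ ((Matrix.isUnit_iff_isUnit_det J).mp hJu)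
  -- stack identity
  have hstack : (Z * Matrix.diagonal ss) *ᵥ w + star w = R2 w := by
    have h1 : J⁻¹ *ᵥ Sum.elim (star (R2 w)) (R2 w) = Sum.elim w (star w) := by
      rw [hMN, Matrix.fromBlocks_mulVec, Sum.elim_comp_inl, Sum.elim_comp_inr]
      have hx1 : M *ᵥ star (R2 w) + N *ᵥ R2 w = w := hFw
      have h2 := congrArg star hFw
      rw [star_add, star_mulVec', star_mulVec', star_star] at h2
      have hx2 : mconj N *ᵥ star (R2 w) + mconj M *ᵥ R2 w = star w := by
        rw [add_comm]; exact h2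
      rw [hx1, hx2]
    have h2 : J *ᵥ Sum.elim w (star w) = Sum.elim (star (R2 w)) (R2 w) := by
      rw [← h1, Matrix.mulVec_mulVec, hJinv, Matrix.one_mulVec]
    rw [hJ, Matrix.fromBlocks_mulVec, Sum.elim_comp_inl, Sum.elim_comp_inr] at h2
    have h3 : ∀ i, ((Z * Matrix.diagonal ss) *ᵥ w + (1 : Matrix (Fin n) (Fin n) ℂ) *ᵥ star w) i
        = R2 w i := fun i => congrFun h2 (Sum.inr i)
    funext i
    have := h3 i
    rwa [Matrix.one_mulVec] at this
  -- scalar consequence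
  set t : Fin n → ℂ := Z *ᵥ (Δs + s * w) with htdef
  have hkey3 : ∀ i, star (w i) = -((1 + star (w i)) * t i) := by
    have hts : t = (Z *ᵥ Δs + (Z * Matrix.diagonal Δs) *ᵥ w) + (Z * Matrix.diagonal ss) *ᵥ w := by
      rw [htdef, mul_diagonal_mulVec, mul_diagonal_mulVec, ← Matrix.mulVec_add, ← Matrix.mulVec_add]
      congr 1
      funext i
      simp only [Pi.add_apply, Pi.mul_apply, hΔs, Pi.sub_apply]
      ring
    have hts2 : t = Z *ᵥ Δs + (Z * Matrix.diagonal s) *ᵥ w := by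
      rw [htdef, mul_diagonal_mulVec, ← Matrix.mulVec_add]
    intro i
    have h2 := congrFun hstack i
    have h3 := congrFun hts i
    have h4 := congrFun hts2 i
    simp only [hR2, hG, Pi.add_apply, Pi.sub_apply, Pi.neg_apply, Pi.mul_apply,
      Pi.star_apply] at h2 h3 h4 ⊢
    linear_combination h2 + h3 + star (w i) * h4
  have hne : ∀ i, 1 + w i ≠ 0 := by
    intro i h
    have h' : 1 + star (w i) = 0 := by
      have := congrArg star h
      simpa using this
    have := hkey3 i
    rw [h', zero_mul, neg_zero] at this
    rw [show w i = 0 from by simpa using congrArg star this, add_zero] at h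
    exact one_ne_zero h
  -- the solution
  set u : Fin n → ℂ := fun i => w i / (1 + w i) with hu
  have hust : star u = -t := by
    ext i
    have h3 := hkey3 i
    have hne' : 1 + star (w i) ≠ 0 := by
      intro h
      exact hne i (by simpa using congrArg star h)
    rw [Pi.neg_apply, hu]
    show star (w i / (1 + w i)) = -(t i)
    rw [star_div₀, show star (1 + w i) = 1 + star (w i) by simp]
    rw [div_eq_iff hne']
    linear_combination h3
  have happ : Δs + s * w = -((Matrix.diagonal Vs * mconj Y * Matrix.diagonal (star Vs)) *ᵥ star u) := by
    rw [hust, Matrix.mulVec_neg, neg_neg, htdef, Matrix.mulVec_mulVec, hKZ, Matrix.one_mulVec]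
  set V : Fin n → ℂ := fun i => Vs i / (1 + w i) with hV
  have hVVs : V - V0 = (Vs - V0) - Vs * u := by
    funext i
    simp only [Pi.sub_apply, Pi.mul_apply, hV, hu]
    field_simp [hne i]
    ring
  have hKu : (Matrix.diagonal Vs * mconj Y * Matrix.diagonal (star Vs)) *ᵥ star u
      = Vs * star (Y *ᵥ (Vs * u)) := by
    rw [Matrix.mul_assoc, ← Matrix.mulVec_mulVec, mul_diagonal_mulVec, diagonal_mulVec',
      ← star_mul', ← star_mulVec']
  refine ⟨V, fun i => div_ne_zero (hVs i) (hne i), ?_, ?_⟩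
  · funext i
    have hb := congrFun hbase i
    have hap := congrFun happ i
    rw [hKu] at hap
    simp only [Matrix.mulVec_diagonal, Pi.star_apply] at hb
    simp only [Pi.add_apply, Pi.mul_apply, Pi.neg_apply, Pi.star_apply] at hap
    have hds : Δs i = s i - ss i := by rw [hΔs]; rfl
    show (Matrix.diagonal V *ᵥ star (Y *ᵥ (V - V0))) i = s i
    rw [Matrix.mulVec_diagonal]
    rw [hVVs, Matrix.mulVec_sub]
    simp only [Pi.star_apply, Pi.sub_apply, star_sub]
    rw [hV]
    show Vs i / (1 + w i) * _ = s i
    rw [div_mul_eq_mul_div, div_eq_iff (hne i)]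
    linear_combination hb - hap + hds
  · intro hr1 i
    have hwi : ‖w i‖ ≤ r := (le_vnorm w i).trans (hwρ.trans hρr)
    have h1w_le : ‖1 + w i‖ ≤ 1 + r := by
      calc ‖1 + w i‖ ≤ ‖(1:ℂ)‖ + ‖w i‖ := norm_add_le _ _
        _ ≤ 1 + r := by rw [norm_one]; linarith
    have h1w_ge : 1 - r ≤ ‖1 + w i‖ := by
      have h0 := norm_add_le (1 + w i) (-(w i))
      have h1 : (1 + w i) + (-(w i)) = 1 := by ring
      rw [h1, norm_one] at h0
      have h2 : ‖-(w i)‖ = ‖w i‖ := by simp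
      linarith [h0, h2.le]
    have h1w_pos : 0 < ‖1 + w i‖ := by linarith
    have hVabs : ‖V i‖ = ‖Vs i‖ / ‖1 + w i‖ := by
      rw [hV]; exact norm_div _ _
    constructor
    · rw [hVabs, div_le_div_iff₀ (by linarith : (0:ℝ) < 1 + r) h1w_pos]
      exact mul_le_mul_of_nonneg_left h1w_le (norm_nonneg (Vs i))
    · rw [hVabs, div_le_div_iff₀ h1w_pos (by linarith : (0:ℝ) < 1 - r)]
      exact mul_le_mul_of_nonneg_left h1w_ge (norm_nonneg (Vs i))
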